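/- In the ERA construction, if H(0) = R_n Σ_n S_n* is a rank-n factorization of the Hankel matrix of Markov parameters Y_k = C A^{k−1} B of a minimal system of order n, then the realization Â = Σ_n^{−1/2} R_n* H(1) S_n Σ_n^{−1/2}, B̂ = first p columns of Σ_n^{1/2} S_n*, Ĉ = first q rows of R_n Σ_n^{1/2} has the same Markov parameters: Ĉ Â^{k−1} B̂ = C A^{k−1} B for all k ≥ 1. -/
import Mathlib


open Matrix

/-- ERA: if `H(0) = R_n Σ_n S_n*` is a rank-`n` factorization (from the SVD) of the block
Hankel matrix of Markov parameters `Y_k = C A^{k−1} B` of a minimal system of order `n`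
(the extended observability and controllability matrices have rank `n`), then the
realization `Â = Σ_n^{−1/2} R_n* H(1) S_n Σ_n^{−1/2}`, `B̂ = ` first `p` columns of
`Σ_n^{1/2} S_n*`, `Ĉ = ` first `q` rows of `R_n Σ_n^{1/2}` has the same Markov
parameters: `Ĉ Â^{k−1} B̂ = C A^{k−1} B` for all `k ≥ 1`. -/
theorem stmt19 {n p q α β : ℕ} (hα : 0 < α) (hβ : 0 < β)
    (A : Matrix (Fin n) (Fin n) ℂ) (B : Matrix (Fin n) (Fin p) ℂ)
    (C : Matrix (Fin q) (Fin n) ℂ)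
    (σ : Fin n → ℝ) (hσ : ∀ i, 0 < σ i)
    (Rn : Matrix (Fin α × Fin q) (Fin n) ℂ) (Sn : Matrix (Fin β × Fin p) (Fin n) ℂ)
    -- minimality: extended observability and controllability matrices have rank n
    (hobs : (Matrix.of fun (ia : Fin α × Fin q) (j : Fin n) =>
      (C * A ^ (ia.1 : ℕ)) ia.2 j).rank = n)
    (hctr : (Matrix.of fun (i : Fin n) (jb : Fin β × Fin p) =>
      (A ^ (jb.1 : ℕ) * B) i jb.2).rank = n)
    -- R_n, S_n have orthonormal columns and Σ_n is the diagonal of nonzero singular values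
    (hR : Rnᴴ * Rn = 1) (hS : Snᴴ * Sn = 1)
    (hfact : (Matrix.of fun (ia : Fin α × Fin q) (jb : Fin β × Fin p) =>
        (C * A ^ ((ia.1 : ℕ) + (jb.1 : ℕ)) * B) ia.2 jb.2) =
      Rn * Matrix.diagonal (fun i => (σ i : ℂ)) * Snᴴ) :
    ∀ k : ℕ,
      (Matrix.of fun (a : Fin q) (i : Fin n) =>
          (Rn * Matrix.diagonal fun i' => ((Real.sqrt (σ i') : ℝ) : ℂ)) (⟨0, hα⟩, a) i) *
        ((Matrix.diagonal fun i' => (((Real.sqrt (σ i'))⁻¹ : ℝ) : ℂ)) * Rnᴴ *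
          (Matrix.of fun (ia : Fin α × Fin q) (jb : Fin β × Fin p) =>
            (C * A ^ ((ia.1 : ℕ) + (jb.1 : ℕ) + 1) * B) ia.2 jb.2) * Sn *
          (Matrix.diagonal fun i' => (((Real.sqrt (σ i'))⁻¹ : ℝ) : ℂ))) ^ k *
        (Matrix.of fun (i : Fin n) (b : Fin p) =>
          ((Matrix.diagonal fun i' => ((Real.sqrt (σ i') : ℝ) : ℂ)) * Snᴴ) i (⟨0, hβ⟩, b)) =
      C * A ^ k * B := by
  intro k
  set O : Matrix (Fin α × Fin q) (Fin n) ℂ :=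
    Matrix.of fun (ia : Fin α × Fin q) (j : Fin n) => (C * A ^ (ia.1 : ℕ)) ia.2 j with hO
  set K : Matrix (Fin n) (Fin β × Fin p) ℂ :=
    Matrix.of fun (i : Fin n) (jb : Fin β × Fin p) => (A ^ (jb.1 : ℕ) * B) i jb.2 with hK
  set E : Matrix (Fin n) (Fin n) ℂ :=
    Matrix.diagonal fun i' => ((Real.sqrt (σ i') : ℝ) : ℂ) with hEdef
  set E' : Matrix (Fin n) (Fin n) ℂ :=
    Matrix.diagonal fun i' => (((Real.sqrt (σ i'))⁻¹ : ℝ) : ℂ) with hE'def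
  set D : Matrix (Fin n) (Fin n) ℂ := Matrix.diagonal fun i => ((σ i : ℝ) : ℂ) with hDdef
  have hsq : ∀ i, ((Real.sqrt (σ i) : ℝ) : ℂ) ≠ 0 := fun i => by
    exact_mod_cast ne_of_gt (Real.sqrt_pos.mpr (hσ i))
  have hscalar : ∀ i, ((σ i : ℝ) : ℂ) = ((Real.sqrt (σ i) : ℝ) : ℂ) * ((Real.sqrt (σ i) : ℝ) : ℂ) := by
    intro i
    rw [← Complex.ofReal_mul, Real.mul_self_sqrt (le_of_lt (hσ i))]
  have hEE' : E * E' = 1 := by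
    rw [hEdef, hE'def, Matrix.diagonal_mul_diagonal]
    rw [show (fun i => ((Real.sqrt (σ i) : ℝ) : ℂ) * (((Real.sqrt (σ i))⁻¹ : ℝ) : ℂ)) = fun _ => (1 : ℂ) from ?_, Matrix.diagonal_one]
    funext i
    push_cast
    exact mul_inv_cancel₀ (hsq i)
  have hE'E : E' * E = 1 := by
    rw [hEdef, hE'def, Matrix.diagonal_mul_diagonal]
    rw [show (fun i => (((Real.sqrt (σ i))⁻¹ : ℝ) : ℂ) * ((Real.sqrt (σ i) : ℝ) : ℂ)) = fun _ => (1 : ℂ) from ?_, Matrix.diagonal_one]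
    funext i
    push_cast
    exact inv_mul_cancel₀ (hsq i)
  have hDE' : D * E' = E := by
    rw [hEdef, hE'def, hDdef, Matrix.diagonal_mul_diagonal]
    refine congrArg Matrix.diagonal (funext fun i => ?_)
    rw [hscalar i]
    push_cast
    rw [mul_assoc, mul_inv_cancel₀ (hsq i), mul_one]
  have hE'D : E' * D = E := by
    rw [hEdef, hE'def, hDdef, Matrix.diagonal_mul_diagonal]
    refine congrArg Matrix.diagonal (funext fun i => ?_)
    rw [hscalar i]
    push_cast
    rw [← mul_assoc, inv_mul_cancel₀ (hsq i), one_mul]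
  -- H(0) = O * K
  have hOK : O * K = Matrix.of fun (ia : Fin α × Fin q) (jb : Fin β × Fin p) =>
      (C * A ^ ((ia.1 : ℕ) + (jb.1 : ℕ)) * B) ia.2 jb.2 := by
    ext ia jb
    rw [Matrix.mul_apply, Matrix.of_apply]
    rw [show C * A ^ ((ia.1 : ℕ) + (jb.1 : ℕ)) * B =
        (C * A ^ (ia.1 : ℕ)) * (A ^ (jb.1 : ℕ) * B) by
      rw [pow_add]; simp only [Matrix.mul_assoc]]
    rw [Matrix.mul_apply]
    rfl
  -- O * A has shifted exponent
  have hOA : O * A = Matrix.of fun (ia : Fin α × Fin q) (j : Fin n) =>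
      (C * A ^ ((ia.1 : ℕ) + 1)) ia.2 j := by
    ext ia j
    rw [Matrix.mul_apply, Matrix.of_apply]
    rw [show C * A ^ ((ia.1 : ℕ) + 1) = (C * A ^ (ia.1 : ℕ)) * A by
      rw [pow_succ]; simp only [Matrix.mul_assoc]]
    rw [Matrix.mul_apply]
    rfl
  -- H(1) = O * A * K
  have hOAK : O * A * K = Matrix.of fun (ia : Fin α × Fin q) (jb : Fin β × Fin p) =>
      (C * A ^ ((ia.1 : ℕ) + (jb.1 : ℕ) + 1) * B) ia.2 jb.2 := by
    rw [hOA]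
    ext ia jb
    rw [Matrix.mul_apply, Matrix.of_apply]
    rw [show C * A ^ ((ia.1 : ℕ) + (jb.1 : ℕ) + 1) * B =
        (C * A ^ ((ia.1 : ℕ) + 1)) * (A ^ (jb.1 : ℕ) * B) by
      rw [show (ia.1 : ℕ) + (jb.1 : ℕ) + 1 = ((ia.1 : ℕ) + 1) + (jb.1 : ℕ) by ring,
        pow_add]; simp only [Matrix.mul_assoc]]
    rw [Matrix.mul_apply]
    rfl
  have hfact' : O * K = Rn * D * Snᴴ := by rw [hOK]; exact hfact
  set P : Matrix (Fin n) (Fin n) ℂ := E' * Rnᴴ * O with hP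
  set Q : Matrix (Fin n) (Fin n) ℂ := K * Sn * E' with hQ
  have hPQ : P * Q = 1 := by
    rw [hP, hQ]
    calc E' * Rnᴴ * O * (K * Sn * E')
        = E' * Rnᴴ * (O * K) * Sn * E' := by simp only [Matrix.mul_assoc]
      _ = E' * (Rnᴴ * Rn) * D * (Snᴴ * Sn) * E' := by
          rw [hfact']; simp only [Matrix.mul_assoc]
      _ = E' * D * E' := by rw [hR, hS, Matrix.mul_one, Matrix.mul_one]
      _ = 1 := by rw [hE'D, hEE']
  have hQP : Q * P = 1 := mul_eq_one_comm.mp hPQ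
  -- Â = P * A * Q
  have hAhat : E' * Rnᴴ *
      (Matrix.of fun (ia : Fin α × Fin q) (jb : Fin β × Fin p) =>
        (C * A ^ ((ia.1 : ℕ) + (jb.1 : ℕ) + 1) * B) ia.2 jb.2) * Sn * E' = P * A * Q := by
    rw [← hOAK, hP, hQ]
    simp only [Matrix.mul_assoc]
  have hpow : ∀ m : ℕ, (P * A * Q) ^ m = P * A ^ m * Q := by
    intro m
    induction m with
    | zero => simp only [pow_zero, Matrix.mul_one, hPQ]
    | succ m ih =>
        rw [pow_succ, ih, pow_succ]
        calc P * A ^ m * Q * (P * A * Q)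
            = P * A ^ m * (Q * P) * A * Q := by simp only [Matrix.mul_assoc]
          _ = P * (A ^ m * A) * Q := by rw [hQP, Matrix.mul_one]; simp only [Matrix.mul_assoc]
  -- Ĉ = C * Q
  have hRnE : Rn * E = O * Q := by
    rw [hQ]
    calc Rn * E = Rn * D * E' := by rw [Matrix.mul_assoc, hDE']
      _ = Rn * D * (Snᴴ * Sn) * E' := by rw [hS, Matrix.mul_one]
      _ = (O * K) * Sn * E' := by rw [hfact']; simp only [Matrix.mul_assoc]
      _ = O * (K * Sn * E') := by simp only [Matrix.mul_assoc]
  have hChat : (Matrix.of fun (a : Fin q) (i : Fin n) => (Rn * E) (⟨0, hα⟩, a) i) = C * Q := by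
    ext a i
    rw [Matrix.of_apply, hRnE, Matrix.mul_apply, Matrix.mul_apply]
    congr 1
    funext m
    congr 1
    show (C * A ^ ((⟨0, hα⟩ : Fin α) : ℕ)) a m = C a m
    simp
  -- B̂ = P * B
  have hESn : E * Snᴴ = P * K := by
    rw [hP]
    calc E * Snᴴ = E' * (D * Snᴴ) := by rw [← Matrix.mul_assoc, hE'D]
      _ = E' * ((Rnᴴ * Rn) * (D * Snᴴ)) := by rw [hR, Matrix.one_mul]
      _ = E' * Rnᴴ * (Rn * D * Snᴴ) := by simp only [Matrix.mul_assoc]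
      _ = E' * Rnᴴ * (O * K) := by rw [hfact']
      _ = E' * Rnᴴ * O * K := by simp only [Matrix.mul_assoc]
  have hBhat : (Matrix.of fun (i : Fin n) (b : Fin p) => (E * Snᴴ) i (⟨0, hβ⟩, b)) = P * B := by
    ext i b
    rw [Matrix.of_apply, hESn, Matrix.mul_apply, Matrix.mul_apply]
    congr 1
    funext m
    congr 1
    show (A ^ ((⟨0, hβ⟩ : Fin β) : ℕ) * B) m b = B m b
    simp
  rw [hChat, hBhat, hAhat, hpow k]
  calc C * Q * (P * A ^ k * Q) * (P * B)
      = C * (Q * P) * A ^ k * (Q * P) * B := by simp only [Matrix.mul_assoc]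
    _ = C * A ^ k * B := by rw [hQP, Matrix.mul_one, Matrix.mul_one]
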